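/- Let X ⊆ ℝ^d be a nonempty closed convex set, let v_1,…,v_m ∈ ℝ^d, and set z_i = Π_X[v_i] for each i, z̄ = (1/m)∑_{ℓ=1}^m z_ℓ and v̄ = (1/m)∑_{ℓ=1}^m v_ℓ. Then ∑_{i=1}^m ‖z_i − z̄‖ ≤ 2 ∑_{i=1}^m ‖v_i − v̄‖. -/

import Mathlib

open Finset InnerProductSpace in
/-- **Projection disagreement bound.**
If `z i` is the Euclidean projection of `v i` onto the nonempty closed convex set `X`,
`z̄` and `v̄` are the averages of the `z i`'s and `v i`'s, then
`∑ i ‖z i − z̄‖ ≤ 2 ∑ i ‖v i − v̄‖`. -/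
theorem sum_dist_proj_avg_le {d m : ℕ} (hm : 0 < m)
    (X : Set (EuclideanSpace ℝ (Fin d)))
    (hXne : X.Nonempty) (hXclosed : IsClosed X) (hXconvex : Convex ℝ X)
    (v z : Fin m → EuclideanSpace ℝ (Fin d))
    (hproj : ∀ i, z i ∈ X ∧ ∀ w ∈ X, ‖z i - v i‖ ≤ ‖w - v i‖) :
    ∑ i, ‖z i - (m : ℝ)⁻¹ • ∑ ℓ, z ℓ‖ ≤ 2 * ∑ i, ‖v i - (m : ℝ)⁻¹ • ∑ ℓ, v ℓ‖ := by
  -- The variational inequality characterizing projections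
  have hinner : ∀ i, ∀ w ∈ X, ⟪v i - z i, w - z i⟫_ℝ ≤ 0 := by
    intro i
    have hz := (hproj i).1
    rw [← norm_eq_iInf_iff_real_inner_le_zero hXconvex hz]
    haveI : Nonempty X := ⟨⟨z i, hz⟩⟩
    have hbdd : BddBelow (Set.range fun w : X => ‖v i - (w : EuclideanSpace ℝ (Fin d))‖) := by
      refine ⟨0, ?_⟩
      rintro _ ⟨w, rfl⟩
      exact norm_nonneg _
    have hle : (⨅ w : X, ‖v i - (w : EuclideanSpace ℝ (Fin d))‖) ≤ ‖v i - z i‖ :=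
      ciInf_le hbdd ⟨z i, hz⟩
    have hge : ‖v i - z i‖ ≤ ⨅ w : X, ‖v i - (w : EuclideanSpace ℝ (Fin d))‖ := by
      refine le_ciInf fun w => ?_
      rw [norm_sub_rev, norm_sub_rev (v i)]
      exact (hproj i).2 w w.2
    exact le_antisymm hge hle
  -- Nonexpansiveness of the projection
  have hnonexp : ∀ i j, ‖z i - z j‖ ≤ ‖v i - v j‖ := by
    intro i j
    have h1 : ⟪v i - z i, z j - z i⟫_ℝ ≤ 0 := hinner i (z j) (hproj j).1
    have h2 : ⟪v j - z j, z i - z j⟫_ℝ ≤ 0 := hinner j (z i) (hproj i).1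
    have key : ‖z i - z j‖ ^ 2 ≤ ⟪v i - v j, z i - z j⟫_ℝ := by
      have expand : ⟪v i - v j, z i - z j⟫_ℝ - ‖z i - z j‖ ^ 2
          = -⟪v i - z i, z j - z i⟫_ℝ - ⟪v j - z j, z i - z j⟫_ℝ := by
        rw [← real_inner_self_eq_norm_sq]
        simp only [inner_sub_left, inner_sub_right]
        ring
      nlinarith
    have hcs : ⟪v i - v j, z i - z j⟫_ℝ ≤ ‖v i - v j‖ * ‖z i - z j‖ :=
      real_inner_le_norm _ _
    rcases eq_or_lt_of_le (norm_nonneg (z i - z j)) with h0 | h0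
    · rw [← h0]; exact norm_nonneg _
    · nlinarith
  set zb := (m : ℝ)⁻¹ • ∑ ℓ, z ℓ with hzb
  set vb := (m : ℝ)⁻¹ • ∑ ℓ, v ℓ with hvb
  have hmR : (0 : ℝ) < (m : ℝ) := Nat.cast_pos.mpr hm
  -- x i - avg = m⁻¹ • ∑ ℓ (x i - x ℓ)
  have havg : ∀ (x : Fin m → EuclideanSpace ℝ (Fin d)) (i : Fin m),
      x i - (m : ℝ)⁻¹ • ∑ ℓ, x ℓ = (m : ℝ)⁻¹ • ∑ ℓ, (x i - x ℓ) := by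
    intro x i
    rw [Finset.sum_sub_distrib, smul_sub, Finset.sum_const, card_univ, Fintype.card_fin,
      ← Nat.cast_smul_eq_nsmul ℝ, smul_smul, inv_mul_cancel₀ hmR.ne', one_smul]
  have step1 : ∀ i, ‖z i - zb‖ ≤ (m : ℝ)⁻¹ * ∑ ℓ, ‖v i - v ℓ‖ := by
    intro i
    rw [hzb, havg z i, norm_smul, norm_inv, Real.norm_natCast]
    gcongr
    exact (norm_sum_le _ _).trans (Finset.sum_le_sum fun ℓ _ => hnonexp i ℓ)
  have step2 : ∀ i ℓ : Fin m, ‖v i - v ℓ‖ ≤ ‖v i - vb‖ + ‖v ℓ - vb‖ := by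
    intro i ℓ
    calc ‖v i - v ℓ‖ = ‖(v i - vb) - (v ℓ - vb)‖ := by abel_nf
      _ ≤ ‖v i - vb‖ + ‖v ℓ - vb‖ := norm_sub_le _ _
  calc ∑ i, ‖z i - zb‖ ≤ ∑ i, (m : ℝ)⁻¹ * ∑ ℓ, ‖v i - v ℓ‖ :=
        Finset.sum_le_sum fun i _ => step1 i
    _ ≤ ∑ i, (m : ℝ)⁻¹ * ∑ ℓ, (‖v i - vb‖ + ‖v ℓ - vb‖) :=
        Finset.sum_le_sum fun i _ => mul_le_mul_of_nonneg_left
          (Finset.sum_le_sum fun ℓ _ => step2 i ℓ) (by positivity)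
    _ = 2 * ∑ i, ‖v i - vb‖ := by
        have key : ∀ i : Fin m, (m : ℝ)⁻¹ * ∑ ℓ, (‖v i - vb‖ + ‖v ℓ - vb‖)
            = ‖v i - vb‖ + (m : ℝ)⁻¹ * ∑ ℓ, ‖v ℓ - vb‖ := by
          intro i
          rw [Finset.sum_add_distrib, Finset.sum_const, card_univ, Fintype.card_fin,
            nsmul_eq_mul, mul_add]
          field_simp
        rw [Finset.sum_congr rfl fun i _ => key i, Finset.sum_add_distrib, Finset.sum_const,
          card_univ, Fintype.card_fin, nsmul_eq_mul]
        field_simp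
        ring
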